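/- Let n ≥ 4, let p : Fin n → ℝ² be the circle placement p(i) = (cos(2πi/n), sin(2πi/n)), and let G be any simple graph on the vertex set Fin n. Then the number of unordered pairs {e, f} of distinct edges e = {a,c}, f = {b,d} of G such that the open segment between p(a) and p(c) intersects the open segment between p(b) and p(d) is at most (n choose 4). (This is the upper-bound direction of Lemma 1: the maximum number of crossings in a drawing obtained by the circle embedding scheme is (n choose 4), attained by the complete graph K_n.) -/

import Mathlib

/-- The circle placement: vertex `i` of `Fin n` is placed at the point
`(cos (2πi/n), sin (2πi/n))` of the unit circle in `ℝ²`. -/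
noncomputable def circlePlacement (n : ℕ) : Fin n → ℝ × ℝ :=
  fun i => (Real.cos (2 * Real.pi * (i : ℕ) / n), Real.sin (2 * Real.pi * (i : ℕ) / n))

namespace CCross

/-- Signed area determinant. -/
def det (x y z : ℝ × ℝ) : ℝ := (y.1 - x.1) * (z.2 - x.2) - (y.2 - x.2) * (z.1 - x.1)

lemma dist_sq_pos {x y : ℝ × ℝ} (h : x ≠ y) :
    0 < (x.1 - y.1)^2 + (x.2 - y.2)^2 := by
  rcases eq_or_ne x.1 y.1 with h1 | h1
  · rcases eq_or_ne x.2 y.2 with h2 | h2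
    · exact absurd (Prod.ext h1 h2) h
    · have : (x.2 - y.2) ≠ 0 := sub_ne_zero.mpr h2
      nlinarith [sq_nonneg (x.1 - y.1), (by positivity : (0:ℝ) < (x.2 - y.2)^2)]
  · have : (x.1 - y.1) ≠ 0 := sub_ne_zero.mpr h1
    nlinarith [sq_nonneg (x.2 - y.2), (by positivity : (0:ℝ) < (x.1 - y.1)^2)]

lemma circle_identity {x y z : ℝ × ℝ} (hx : x.1^2 + x.2^2 = 1) (hy : y.1^2 + y.2^2 = 1)
    (hz : z.1^2 + z.2^2 = 1) :
    ((x.1-y.1)^2+(x.2-y.2)^2) * ((y.1-z.1)^2+(y.2-z.2)^2) * ((x.1-z.1)^2+(x.2-z.2)^2)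
      = 4 * det x y z ^ 2 := by
  unfold det
  set_option maxHeartbeats 2000000 in
  linear_combination ((-3)*z.2*z.2 + (1)*z.2*z.2*z.2*z.2 + (1)*z.1*z.1 + (2)*z.1*z.1*z.2*z.2 + (1)*z.1*z.1*z.1*z.1 + (6)*y.2*z.2 + (-2)*y.2*z.2*z.2*z.2 + (-2)*y.2*z.1*z.1*z.2 + (-3)*y.2*y.2 + (2)*y.2*y.2*z.2*z.2 + (2)*y.2*y.2*z.1*z.1 + (-2)*y.2*y.2*y.2*z.2 + (1)*y.2*y.2*y.2*y.2 + (-2)*y.1*z.1 + (2)*y.1*z.1*z.2*z.2 + (2)*y.1*z.1*z.1*z.1 + (-8)*y.1*y.2*z.1*z.2 + (2)*y.1*y.2*y.2*z.1 + (1)*y.1*y.1 + (2)*y.1*y.1*z.2*z.2 + (-6)*y.1*y.1*z.1*z.1 + (-2)*y.1*y.1*y.2*z.2 + (2)*y.1*y.1*y.2*y.2 + (2)*y.1*y.1*y.1*z.1 + (1)*y.1*y.1*y.1*y.1 + (-2)*x.2*z.2*z.2*z.2 + (-2)*x.2*z.1*z.1*z.2 + (2)*x.2*y.2*z.2*z.2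 + (-2)*x.2*y.2*z.1*z.1 + (2)*x.2*y.2*y.2*z.2 + (-2)*x.2*y.2*y.2*y.2 + (4)*x.2*y.1*z.1*z.2 + (4)*x.2*y.1*y.2*z.1 + (-2)*x.2*y.1*y.1*z.2 + (-2)*x.2*y.1*y.1*y.2 + (1)*x.2*x.2*z.2*z.2 + (1)*x.2*x.2*z.1*z.1 + (-2)*x.2*x.2*y.2*z.2 + (1)*x.2*x.2*y.2*y.2 + (-2)*x.2*x.2*y.1*z.1 + (1)*x.2*x.2*y.1*y.1 + (-2)*x.1*z.1*z.2*z.2 + (-2)*x.1*z.1*z.1*z.1 + (4)*x.1*y.2*z.1*z.2 + (-2)*x.1*y.2*y.2*z.1 + (-2)*x.1*y.1*z.2*z.2 + (2)*x.1*y.1*z.1*z.1 + (4)*x.1*y.1*y.2*z.2 + (-2)*x.1*y.1*y.2*y.2 + (2)*x.1*y.1*y.1*z.1 + (-2)*x.1*y.1*y.1*y.1 + (1)*x.1*x.1*z.2*z.2 + (1)*x.1*x.1*z.1*z.1 + (-2)*x.1*x.1*y.2*z.2 + (1)*x.1*x.1*y.2*y.2 + (-2)*x.1*x.1*y.1*z.1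 + (1)*x.1*x.1*y.1*y.1) * hx + ((2) + (-1)*z.2*z.2 + (1)*z.2*z.2*z.2*z.2 + (-5)*z.1*z.1 + (2)*z.1*z.1*z.2*z.2 + (1)*z.1*z.1*z.1*z.1 + (-2)*y.2*z.2 + (-2)*y.2*z.2*z.2*z.2 + (-2)*y.2*z.1*z.1*z.2 + (1)*y.2*y.2 + (1)*y.2*y.2*z.2*z.2 + (1)*y.2*y.2*z.1*z.1 + (2)*y.1*z.1 + (-2)*y.1*z.1*z.2*z.2 + (-2)*y.1*z.1*z.1*z.1 + (1)*y.1*y.1 + (1)*y.1*y.1*z.2*z.2 + (1)*y.1*y.1*z.1*z.1 + (4)*x.2*z.2 + (-2)*x.2*z.2*z.2*z.2 + (-2)*x.2*z.1*z.1*z.2 + (-2)*x.2*y.2 + (2)*x.2*y.2*z.2*z.2 + (-2)*x.2*y.2*z.1*z.1 + (-2)*x.2*y.2*y.2*z.2 + (4)*x.2*y.1*z.1*z.2 + (-2)*x.2*y.1*y.1*z.2 + (-4)*x.2*x.2 + (8)*x.2*x.2*z.1*z.1 + (4)*x.2*x.2*y.2*z.2 + (-4)*x.2*x.2*y.1*z.1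 + (2)*x.1*z.1*z.2*z.2 + (2)*x.1*z.1*z.1*z.1 + (4)*x.1*y.2*z.1*z.2 + (-2)*x.1*y.2*y.2*z.1 + (-2)*x.1*y.1 + (-2)*x.1*y.1*z.2*z.2 + (2)*x.1*y.1*z.1*z.1 + (-2)*x.1*y.1*y.1*z.1 + (-8)*x.1*x.2*z.1*z.2 + (4)*x.1*x.2*y.2*z.1 + (4)*x.1*x.2*y.1*z.2) * hy + ((-2) + (2)*z.2*z.2 + (2)*z.1*z.1 + (-4)*y.2*z.2 + (4)*y.2*y.2 + (-4)*x.2*z.2 + (2)*x.2*y.2 + (-2)*x.2*y.2*z.2*z.2 + (-2)*x.2*y.2*z.1*z.1 + (4)*x.2*y.2*y.2*z.2 + (4)*x.2*y.1*y.2*z.1 + (4)*x.2*x.2 + (4)*x.2*x.2*y.2*z.2 + (-8)*x.2*x.2*y.2*y.2 + (-4)*x.2*x.2*y.1*z.1 + (-4)*x.1*y.2*y.2*z.1 + (2)*x.1*y.1 + (-2)*x.1*y.1*z.2*z.2 + (-2)*x.1*y.1*z.1*z.1 + (4)*x.1*y.1*y.2*z.2 + (4)*x.1*x.2*y.2*z.1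 + (4)*x.1*x.2*y.1*z.2 + (-8)*x.1*x.2*y.1*y.2) * hz

lemma det_ne_zero {x y z : ℝ × ℝ} (hx : x.1^2 + x.2^2 = 1) (hy : y.1^2 + y.2^2 = 1)
    (hz : z.1^2 + z.2^2 = 1) (hxy : x ≠ y) (hxz : x ≠ z) (hyz : y ≠ z) :
    det x y z ≠ 0 := by
  intro h
  have key := circle_identity hx hy hz
  rw [h] at key
  have hpos := mul_pos (mul_pos (dist_sq_pos hxy) (dist_sq_pos hyz)) (dist_sq_pos hxz)
  rw [key] at hpos
  norm_num at hpos

lemma collinear_eq {x y z : ℝ × ℝ} (hx : x.1^2 + x.2^2 = 1) (hy : y.1^2 + y.2^2 = 1)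
    (hz : z.1^2 + z.2^2 = 1) (h : det x y z = 0) : x = y ∨ x = z ∨ y = z := by
  by_contra hc
  push_neg at hc
  exact det_ne_zero hx hy hz hc.1 hc.2.1 hc.2.2 h

lemma seg_param {a b q : ℝ × ℝ} (h : q ∈ openSegment ℝ a b) :
    ∃ t : ℝ, 0 < t ∧ t < 1 ∧ q.1 = (1-t)*a.1 + t*b.1 ∧ q.2 = (1-t)*a.2 + t*b.2 := by
  rw [openSegment_eq_image] at h
  obtain ⟨t, ht, hq⟩ := h
  refine ⟨t, ht.1, ht.2, ?_, ?_⟩ <;> rw [← hq] <;> simp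


/-- Crossing of the open chords x–z and y–w. -/
def Cross (x z y w : ℝ × ℝ) : Prop :=
  (openSegment ℝ x z ∩ openSegment ℝ y w).Nonempty

lemma Cross.swapL {x z y w : ℝ × ℝ} (h : Cross x z y w) : Cross z x y w := by
  unfold Cross at *; rwa [openSegment_symm ℝ z x]

lemma Cross.swapR {x z y w : ℝ × ℝ} (h : Cross x z y w) : Cross x z w y := by
  unfold Cross at *; rwa [openSegment_symm ℝ w y]

lemma Cross.comm {x z y w : ℝ × ℝ} (h : Cross x z y w) : Cross y w x z := by
  unfold Cross at *; rwa [Set.inter_comm]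

lemma seg_param' {a b q : ℝ × ℝ} (h : q ∈ openSegment ℝ a b) :
    ∃ t : ℝ, 0 < t ∧ t < 1 ∧ q.1 = (1-t)*a.1 + t*b.1 ∧ q.2 = (1-t)*a.2 + t*b.2 := by
  rw [openSegment_eq_image] at h
  obtain ⟨t, ht, hq⟩ := h
  refine ⟨t, ht.1, ht.2, ?_, ?_⟩ <;> rw [← hq] <;> simp

lemma opposite_signs {A B t : ℝ} (hB : B ≠ 0) (h0 : 0 < t) (h1 : t < 1)
    (h : (1-t)*A + t*B = 0) : A * B < 0 := by
  have htB : t * B ≠ 0 := mul_ne_zero (ne_of_gt h0) hB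
  have e : t*(1-t)*(A*B) = -((t*B)*(t*B)) := by linear_combination (t*B)*h
  have hp : 0 < (t*B)*(t*B) := mul_self_pos.mpr htB
  have hq : 0 < t*(1-t) := by nlinarith
  nlinarith [e, hp, hq]

lemma cross_signs {x z y w : ℝ × ℝ}
    (hx : x.1^2 + x.2^2 = 1) (hz : z.1^2 + z.2^2 = 1)
    (hy : y.1^2 + y.2^2 = 1) (hw : w.1^2 + w.2^2 = 1)
    (hxz : x ≠ z) (hxy : x ≠ y) (hxw : x ≠ w)
    (hzy : z ≠ y) (hzw : z ≠ w) (hyw : y ≠ w)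
    (h : Cross x z y w) :
    det x z y * det x z w < 0 ∧ det y w x * det y w z < 0 := by
  obtain ⟨q, hq1, hq2⟩ := h
  obtain ⟨s, hs0, hs1, e1, e2⟩ := seg_param' hq1
  obtain ⟨t, ht0, ht1, f1, f2⟩ := seg_param' hq2
  constructor
  · have key : (1-t) * det x z y + t * det x z w = 0 := by
      unfold det
      linear_combination (z.1-x.1)*e2 - (z.2-x.2)*e1 - (z.1-x.1)*f2 + (z.2-x.2)*f1
    have hA : det x z y ≠ 0 := det_ne_zero hx hz hy hxz hxy hzy
    have hB : det x z w ≠ 0 := det_ne_zero hx hz hw hxz hxw hzw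
    exact opposite_signs hB ht0 ht1 key
  · have key : (1-s) * det y w x + s * det y w z = 0 := by
      unfold det
      linear_combination (w.1-y.1)*f2 - (w.2-y.2)*f1 - (w.1-y.1)*e2 + (w.2-y.2)*e1
    have hA : det y w x ≠ 0 := det_ne_zero hy hw hx hyw (Ne.symm hxy) (Ne.symm hxw)
    have hB : det y w z ≠ 0 := det_ne_zero hy hw hz hyw (Ne.symm hzy) (Ne.symm hzw)
    exact opposite_signs hB hs0 hs1 key

lemma no_double_cross {x y z w : ℝ × ℝ}
    (hx : x.1^2 + x.2^2 = 1) (hy : y.1^2 + y.2^2 = 1)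
    (hz : z.1^2 + z.2^2 = 1) (hw : w.1^2 + w.2^2 = 1)
    (hxy : x ≠ y) (hxz : x ≠ z) (hxw : x ≠ w)
    (hyz : y ≠ z) (hyw : y ≠ w) (hzw : z ≠ w)
    (h1 : Cross x z y w) (h2 : Cross x y z w) : False := by
  obtain ⟨s1, s2⟩ := cross_signs hx hz hy hw hxz hxy hxw (Ne.symm hyz) hzw hyw h1
  obtain ⟨s3, s4⟩ := cross_signs hx hy hz hw hxy hxz hxw hyz hyw hzw h2
  have r1 : det x z y = -det x y z := by unfold det; ring
  have r2 : det y w x = det x y w := by unfold det; ring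
  have r3 : det y w z = -det y z w := by unfold det; ring
  have r4 : det z w x = det x z w := by unfold det; ring
  have r5 : det z w y = det y z w := by unfold det; ring
  set E := det x y z with hE
  set C := det x y w with hC
  set B := det x z w with hB
  set A := det y z w with hA
  rw [r1] at s1
  rw [r2, r3] at s2
  rw [r4, r5] at s4
  -- s1 : -E * B < 0, s2 : C * -A < 0, s3 : E * C < 0, s4 : B * A < 0
  have hEB : 0 < E * B := by nlinarith [s1]
  have hAC : 0 < A * C := by nlinarith [s2]
  have hAB : A * B < 0 := by nlinarith [s4]
  have hBne : B ≠ 0 := by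
    intro h; rw [h, mul_zero] at hEB; exact lt_irrefl _ hEB
  have hBB : 0 < B * B := mul_self_pos.mpr hBne
  have h7 : E * B * (A * B) < 0 := mul_neg_of_pos_of_neg hEB hAB
  have hEA : E * A < 0 := by nlinarith [h7, hBB]
  have hid : E - C + B - A = 0 := by
    rw [hE, hC, hB, hA]; unfold det; ring
  have hid2 : E*E - E*C + E*B - E*A = 0 := by linear_combination E * hid
  nlinarith [mul_self_nonneg E, hid2, s3, hEB, hEA]

lemma no_double_cross' {x y z w : ℝ × ℝ}
    (hx : x.1^2 + x.2^2 = 1) (hy : y.1^2 + y.2^2 = 1)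
    (hz : z.1^2 + z.2^2 = 1) (hw : w.1^2 + w.2^2 = 1)
    (hxy : x ≠ y) (hxz : x ≠ z) (hxw : x ≠ w)
    (hyz : y ≠ z) (hyw : y ≠ w) (hzw : z ≠ w)
    (h1 : Cross x z y w) (h2 : Cross x w y z) : False :=
  no_double_cross hx hw hz hy hxw hxz hxy (Ne.symm hzw) (Ne.symm hyw) (Ne.symm hyz)
    h1.swapR h2.swapR

lemma cross_shared {x z w : ℝ × ℝ}
    (hx : x.1^2 + x.2^2 = 1) (hz : z.1^2 + z.2^2 = 1) (hw : w.1^2 + w.2^2 = 1)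
    (hxz : x ≠ z) (hxw : x ≠ w) (h : Cross x z x w) : z = w := by
  obtain ⟨q, hq1, hq2⟩ := h
  obtain ⟨t, ht0, ht1, e1, e2⟩ := seg_param' hq1
  obtain ⟨u, hu0, hu1, f1, f2⟩ := seg_param' hq2
  have d1 : q.1 - x.1 = t*(z.1-x.1) := by linarith
  have d2 : q.2 - x.2 = t*(z.2-x.2) := by linarith
  have d3 : q.1 - x.1 = u*(w.1-x.1) := by linarith
  have d4 : q.2 - x.2 = u*(w.2-x.2) := by linarith
  have hdet : det x z w * (t*u) = 0 := by
    unfold det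
    linear_combination (-(u*(w.2-x.2)))*d1 + (u*(w.1-x.1))*d2 + (q.2-x.2)*d3 - (q.1-x.1)*d4
  have htu : t*u ≠ 0 := by positivity
  have hd0 : det x z w = 0 := by
    rcases mul_eq_zero.mp hdet with h | h
    · exact h
    · exact absurd h htu
  rcases collinear_eq hx hz hw hd0 with h | h | h
  · exact absurd h hxz
  · exact absurd h hxw
  · exact h



lemma cp_circle (n : ℕ) (i : Fin n) :
    (circlePlacement n i).1^2 + (circlePlacement n i).2^2 = 1 := by
  simp [circlePlacement, Real.cos_sq_add_sin_sq]

lemma cp_inj (n : ℕ) : Function.Injective (circlePlacement n) := by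
  intro i j h
  unfold circlePlacement at h
  rw [Prod.mk.injEq] at h
  obtain ⟨h1, h2⟩ := h
  have hang := Real.Angle.cos_sin_inj h1 h2
  rw [Real.Angle.angle_eq_iff_two_pi_dvd_sub] at hang
  obtain ⟨k, hk⟩ := hang
  have hn : (0:ℝ) < n := by exact_mod_cast i.pos
  have hne : (n:ℝ) ≠ 0 := ne_of_gt hn
  have hπ := Real.pi_pos
  have key : 2*Real.pi*((i:ℕ):ℝ) - 2*Real.pi*((j:ℕ):ℝ) = 2*Real.pi*(k*n) := by
    field_simp at hk
    linear_combination (2*Real.pi) * hk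
  have hij : ((i:ℕ):ℝ) - ((j:ℕ):ℝ) = k*n := by
    have h2π : (2*Real.pi) ≠ 0 := by positivity
    apply mul_left_cancel₀ h2π
    linear_combination key
  have hi : ((i:ℕ):ℝ) < n := by exact_mod_cast i.isLt
  have hj : ((j:ℕ):ℝ) < n := by exact_mod_cast j.isLt
  have hi0 : (0:ℝ) ≤ ((i:ℕ):ℝ) := by positivity
  have hj0 : (0:ℝ) ≤ ((j:ℕ):ℝ) := by positivity
  have hk0 : k = 0 := by
    by_contra hk0
    rcases lt_or_gt_of_ne hk0 with hlt | hgt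
    · have : (k:ℝ) ≤ -1 := by exact_mod_cast (by omega : k ≤ -1)
      nlinarith
    · have : (1:ℝ) ≤ (k:ℝ) := by exact_mod_cast (by omega : 1 ≤ k)
      nlinarith
  rw [hk0] at hij
  have : (i:ℕ) = (j:ℕ) := by exact_mod_cast (by push_cast at hij ⊢; linarith : ((i:ℕ):ℝ) = ((j:ℕ):ℝ))
  exact Fin.ext this




lemma pswap1 {α : Type*} [DecidableEq α] (x y z w : α) :
    ({s(x,y), s(z,w)} : Finset (Sym2 α)) = {s(y,x), s(z,w)} := by rw [Sym2.eq_swap]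

lemma pswap2 {α : Type*} [DecidableEq α] (x y z w : α) :
    ({s(x,y), s(z,w)} : Finset (Sym2 α)) = {s(x,y), s(w,z)} := by rw [@Sym2.eq_swap _ z w]

lemma pcomm {α : Type*} [DecidableEq α] (x y z w : α) :
    ({s(x,y), s(z,w)} : Finset (Sym2 α)) = {s(z,w), s(x,y)} := Finset.pair_comm _ _

set_option maxHeartbeats 1000000 in
lemma matching_eq (n : ℕ) (p : Fin n → ℝ × ℝ)
    (hcirc : ∀ i, (p i).1^2 + (p i).2^2 = 1) (hinj : Function.Injective p)
    (a c b d a' c' b' d' : Fin n)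
    (hac : a ≠ c) (hab : a ≠ b) (had : a ≠ d) (hcb : c ≠ b) (hcd : c ≠ d) (hbd : b ≠ d)
    (hac' : a' ≠ c') (hab' : a' ≠ b') (had' : a' ≠ d')
    (hcb' : c' ≠ b') (hcd' : c' ≠ d') (hbd' : b' ≠ d')
    (hV : ({a',c',b',d'} : Finset (Fin n)) = {a,c,b,d})
    (h1 : Cross (p a) (p c) (p b) (p d))
    (h2 : Cross (p a') (p c') (p b') (p d')) :
    ({s(a',c'), s(b',d')} : Finset (Sym2 (Fin n))) = {s(a,c), s(b,d)} := by
  have pab : p a ≠ p b := fun h => hab (hinj h)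
  have pac : p a ≠ p c := fun h => hac (hinj h)
  have pad : p a ≠ p d := fun h => had (hinj h)
  have pbc : p b ≠ p c := fun h => hcb (hinj h.symm)
  have pbd : p b ≠ p d := fun h => hbd (hinj h)
  have pcd : p c ≠ p d := fun h => hcd (hinj h)
  have hN2 : ¬ Cross (p a) (p b) (p c) (p d) :=
    fun h => no_double_cross (hcirc a) (hcirc b) (hcirc c) (hcirc d)
      pab pac pad pbc pbd pcd h1 h
  have hN3 : ¬ Cross (p a) (p d) (p b) (p c) :=
    fun h => no_double_cross' (hcirc a) (hcirc b) (hcirc c) (hcirc d)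
      pab pac pad pbc pbd pcd h1 h
  have ha' : a' = a ∨ a' = c ∨ a' = b ∨ a' = d := by
    have : a' ∈ ({a,c,b,d} : Finset (Fin n)) := by rw [← hV]; simp
    simpa using this
  have hc'm : c' = a ∨ c' = c ∨ c' = b ∨ c' = d := by
    have : c' ∈ ({a,c,b,d} : Finset (Fin n)) := by rw [← hV]; simp
    simpa using this
  have hb'm : b' = a ∨ b' = c ∨ b' = b ∨ b' = d := by
    have : b' ∈ ({a,c,b,d} : Finset (Fin n)) := by rw [← hV]; simp
    simpa using this
  have hd'm : d' = a ∨ d' = c ∨ d' = b ∨ d' = d := by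
    have : d' ∈ ({a,c,b,d} : Finset (Fin n)) := by rw [← hV]; simp
    simpa using this
  clear hV pab pac pad pbc pbd pcd h1 hcirc hinj
  rcases ha' with rfl|rfl|rfl|rfl <;> rcases hc'm with rfl|rfl|rfl|rfl <;>
    rcases hb'm with rfl|rfl|rfl|rfl <;> rcases hd'm with rfl|rfl|rfl|rfl <;>
    first
      | exact absurd rfl hac'
      | exact absurd rfl hab'
      | exact absurd rfl had'
      | exact absurd rfl hcb'
      | exact absurd rfl hcd'
      | exact absurd rfl hbd'
      | exact rfl
      | exact pswap1 _ _ _ _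
      | exact pswap2 _ _ _ _
      | exact (pswap1 _ _ _ _).trans (pswap2 _ _ _ _)
      | exact pcomm _ _ _ _
      | exact (pcomm _ _ _ _).trans (pswap1 _ _ _ _)
      | exact (pcomm _ _ _ _).trans (pswap2 _ _ _ _)
      | exact ((pcomm _ _ _ _).trans (pswap1 _ _ _ _)).trans (pswap2 _ _ _ _)
      | exact absurd h2 hN2
      | exact absurd h2.swapL hN2
      | exact absurd h2.swapR hN2
      | exact absurd h2.swapL.swapR hN2
      | exact absurd h2.comm hN2
      | exact absurd h2.comm.swapL hN2
      | exact absurd h2.comm.swapR hN2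
      | exact absurd h2.comm.swapL.swapR hN2
      | exact absurd h2 hN3
      | exact absurd h2.swapL hN3
      | exact absurd h2.swapR hN3
      | exact absurd h2.swapL.swapR hN3
      | exact absurd h2.comm hN3
      | exact absurd h2.comm.swapL hN3
      | exact absurd h2.comm.swapR hN3
      | exact absurd h2.comm.swapL.swapR hN3


def sym2verts {α : Type*} [DecidableEq α] : Sym2 α → Finset α :=
  Sym2.lift ⟨fun x y => {x, y}, fun x y => Finset.pair_comm x y⟩

lemma sup_pair {α : Type*} [DecidableEq α] (a c b d : α) :
    ({s(a,c), s(b,d)} : Finset (Sym2 α)).sup sym2verts = {a,c,b,d} := by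
  rw [Finset.sup_insert, Finset.sup_singleton]
  ext x
  simp [sym2verts, Finset.sup_eq_union]
  tauto

lemma card4 {α : Type*} [DecidableEq α] {a c b d : α}
    (hac : a ≠ c) (hab : a ≠ b) (had : a ≠ d) (hcb : c ≠ b) (hcd : c ≠ d) (hbd : b ≠ d) :
    ({a,c,b,d} : Finset α).card = 4 := by
  rw [Finset.card_insert_of_notMem (by simp [hac, hab, had]),
    Finset.card_insert_of_notMem (by simp [hcb, hcd]),
    Finset.card_insert_of_notMem (by simp [hbd]), Finset.card_singleton]

lemma extract {n : ℕ} {G : SimpleGraph (Fin n)} [Fintype G.edgeSet]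
    {S : Finset (Sym2 (Fin n))} (hS : S ∈ G.edgeFinset.powersetCard 2)
    {a c b d : Fin n} (hSe : S = {s(a,c), s(b,d)})
    (hcr : Cross (circlePlacement n a) (circlePlacement n c)
      (circlePlacement n b) (circlePlacement n d)) :
    a ≠ c ∧ a ≠ b ∧ a ≠ d ∧ c ≠ b ∧ c ≠ d ∧ b ≠ d := by
  classical
  obtain ⟨hsub, hc2⟩ := Finset.mem_powersetCard.mp hS
  have he1 : s(a,c) ∈ G.edgeFinset := hsub (by rw [hSe]; exact Finset.mem_insert_self _ _)
  have he2 : s(b,d) ∈ G.edgeFinset := hsub (by rw [hSe]; simp)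
  have hadj1 : G.Adj a c := by
    rwa [SimpleGraph.mem_edgeFinset, SimpleGraph.mem_edgeSet] at he1
  have hadj2 : G.Adj b d := by
    rwa [SimpleGraph.mem_edgeFinset, SimpleGraph.mem_edgeSet] at he2
  have hac : a ≠ c := hadj1.ne
  have hbd : b ≠ d := hadj2.ne
  have hne : s(a,c) ≠ s(b,d) := by
    intro h
    rw [hSe, h] at hc2
    simp at hc2
  have hinj := cp_inj n
  refine ⟨hac, ?_, ?_, ?_, ?_, hbd⟩
  · rintro rfl
    have heq := cross_shared (cp_circle n a) (cp_circle n c) (cp_circle n d)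
      (fun h => hac (hinj h)) (fun h => hbd (hinj h)) hcr
    exact hne (by rw [hinj heq])
  · rintro rfl
    have heq := cross_shared (cp_circle n a) (cp_circle n c) (cp_circle n b)
      (fun h => hac (hinj h)) (fun h => hbd (hinj h).symm) hcr.swapR
    apply hne
    rw [← hinj heq]
    exact Sym2.eq_swap
  · rintro rfl
    have heq := cross_shared (cp_circle n c) (cp_circle n a) (cp_circle n d)
      (fun h => hac (hinj h.symm)) (fun h => hbd (hinj h)) hcr.swapL
    apply hne
    rw [hinj heq]
    exact Sym2.eq_swap
  · rintro rfl
    have heq := cross_shared (cp_circle n c) (cp_circle n a) (cp_circle n b)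
      (fun h => hac (hinj h.symm)) (fun h => hbd (hinj h).symm) hcr.swapL.swapR
    apply hne
    rw [hinj heq]

end CCross

open scoped Classical in
/-- Upper bound for the circle embedding scheme: for any simple graph `G` on `Fin n`,
the number of unordered pairs `{e, f}` of distinct edges `e = {a, c}`, `f = {b, d}`
of `G` whose open segments `p a p c` and `p b p d` intersect is at most `n.choose 4`. -/
theorem circleDrawing_crossings_le (n : ℕ) (hn : 4 ≤ n) (G : SimpleGraph (Fin n)) :
    ((G.edgeFinset.powersetCard 2).filter
      (fun S => ∃ a c b d : Fin n,
        S = {s(a, c), s(b, d)} ∧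
        (openSegment ℝ (circlePlacement n a) (circlePlacement n c) ∩
          openSegment ℝ (circlePlacement n b) (circlePlacement n d)).Nonempty)).card
      ≤ n.choose 4 := by
  classical
  rw [show n.choose 4 = ((Finset.univ : Finset (Fin n)).powersetCard 4).card from by
    rw [Finset.card_powersetCard, Finset.card_univ, Fintype.card_fin]]
  apply Finset.card_le_card_of_injOn (fun S => S.sup CCross.sym2verts)
  · intro S hS
    rw [Finset.mem_coe, Finset.mem_filter] at hS
    obtain ⟨hS1, a, c, b, d, hSe, hcr⟩ := hS
    obtain ⟨hac, hab, had, hcb, hcd, hbd⟩ := CCross.extract hS1 hSe hcr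
    rw [Finset.mem_coe, Finset.mem_powersetCard]
    refine ⟨Finset.subset_univ _, ?_⟩
    beta_reduce
    rw [hSe, CCross.sup_pair]
    exact CCross.card4 hac hab had hcb hcd hbd
  · intro S1 hS1 S2 hS2 hf
    rw [Finset.mem_coe, Finset.mem_filter] at hS1 hS2
    obtain ⟨hS1f, a, c, b, d, hSe1, hcr1⟩ := hS1
    obtain ⟨hS2f, a', c', b', d', hSe2, hcr2⟩ := hS2
    obtain ⟨hac, hab, had, hcb, hcd, hbd⟩ := CCross.extract hS1f hSe1 hcr1
    obtain ⟨hac', hab', had', hcb', hcd', hbd'⟩ := CCross.extract hS2f hSe2 hcr2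
    have hV : ({a',c',b',d'} : Finset (Fin n)) = {a,c,b,d} := by
      have e1 : S1.sup CCross.sym2verts = {a,c,b,d} := by rw [hSe1, CCross.sup_pair]
      have e2 : S2.sup CCross.sym2verts = {a',c',b',d'} := by rw [hSe2, CCross.sup_pair]
      rw [← e1, ← e2]; exact hf.symm
    rw [hSe1, hSe2]
    exact (CCross.matching_eq n (circlePlacement n) (CCross.cp_circle n) (CCross.cp_inj n)
      a c b d a' c' b' d' hac hab had hcb hcd hbd hac' hab' had' hcb' hcd' hbd'
      hV hcr1 hcr2).symm
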